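/- For positive definite matrices A and B, A∇B - A♯B = (1/8)(A-B)((A∇B + A♯B)/2)^{-1}(A-B), where ∇ is the arithmetic mean and ♯ the geometric mean with weight 1/2. -/

import Mathlib

open Matrix ComplexOrder

/-- Matrix square root via the real continuous functional calculus. -/
noncomputable def msqrt {n : ℕ} (A : Matrix (Fin n) (Fin n) ℂ) :
    Matrix (Fin n) (Fin n) ℂ :=
  cfc Real.sqrt A

/-- The Kubo–Ando mean associated to a representing function `f`:
`A σ_f B = A^{1/2} f(A^{-1/2} B A^{-1/2}) A^{1/2}`. -/
noncomputable def opMean {n : ℕ} (f : ℝ → ℝ) (A B : Matrix (Fin n) (Fin n) ℂ) :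
    Matrix (Fin n) (Fin n) ℂ :=
  msqrt A * cfc f ((msqrt A)⁻¹ * B * (msqrt A)⁻¹) * msqrt A

/-- A function `f : ℝ → ℝ` is operator monotone on `[0,∞)` if it is monotone for the
Löwner order on positive semidefinite matrices of every size. -/
def OperatorMonotone (f : ℝ → ℝ) : Prop :=
  ∀ (n : ℕ) (A B : Matrix (Fin n) (Fin n) ℂ), A.PosSemidef → B.PosSemidef →
    (B - A).PosSemidef → (cfc f B - cfc f A).PosSemidef

open scoped MatrixOrder in
/-- `msqrt` agrees with `Matrix.PosSemidef.sqrt`. -/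
lemma msqrt_eq {n : ℕ} {A : Matrix (Fin n) (Fin n) ℂ} (hA : A.PosSemidef) :
    msqrt A = CFC.sqrt A := by
  rw [msqrt, CFC.sqrt_eq_real_sqrt A hA.nonneg]
  exact (cfcₙ_eq_cfc (hf0 := Real.sqrt_zero)).symm

open scoped MatrixOrder in
lemma msqrt_posSemidef {n : ℕ} {A : Matrix (Fin n) (Fin n) ℂ} (hA : A.PosSemidef) :
    (msqrt A).PosSemidef := by
  rw [msqrt_eq hA]; exact (CFC.sqrt_nonneg A).posSemidef

open scoped MatrixOrder in
lemma msqrt_mul_self' {n : ℕ} {A : Matrix (Fin n) (Fin n) ℂ} (hA : A.PosSemidef) :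
    msqrt A * msqrt A = A := by
  rw [msqrt_eq hA]; exact CFC.sqrt_mul_sqrt_self A hA.nonneg

/-- The scalar-free core identity: with `S² = C`, one has
`(1+C)/2 - S = (1/8)(1-C) N⁻¹ (1-C)` where `N = ((1+C)/2 + S)/2`. -/
lemma key_id {m : Type*} [Fintype m] [DecidableEq m] (S : Matrix m m ℂ)
    (h1 : (1 + S) * (1 + S)⁻¹ = 1) (h2 : (1 + S)⁻¹ * (1 + S) = 1) :
    (2:ℝ)⁻¹ • (1 + S * S) - S =
      (8:ℝ)⁻¹ • ((1 - S * S) * ((2:ℝ)⁻¹ • ((2:ℝ)⁻¹ • (1 + S * S) + S))⁻¹ * (1 - S * S)) := by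
  have hmid : ((2:ℝ)⁻¹ • ((2:ℝ)⁻¹ • (1 + S * S) + S)) = (4:ℝ)⁻¹ • ((1 + S) * (1 + S)) := by
    have h : (1 + S) * (1 + S) = 1 + S + S + S * S := by noncomm_ring
    rw [h]
    module
  have hinv : ((4:ℝ)⁻¹ • ((1 + S) * (1 + S)))⁻¹ = (4:ℝ) • ((1 + S)⁻¹ * (1 + S)⁻¹) := by
    apply Matrix.inv_eq_right_inv
    rw [smul_mul_assoc, mul_smul_comm, smul_smul]
    norm_num
    calc (1 + S) * (1 + S) * ((1 + S)⁻¹ * (1 + S)⁻¹)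
        = (1 + S) * ((1 + S) * (1 + S)⁻¹) * (1 + S)⁻¹ := by noncomm_ring
      _ = 1 := by rw [h1, mul_one, h1]
  rw [hmid, hinv]
  have hfac : (1 - S * S) * ((4:ℝ) • ((1 + S)⁻¹ * (1 + S)⁻¹)) * (1 - S * S)
      = (4:ℝ) • ((1 - S) * (1 - S)) := by
    rw [mul_smul_comm, smul_mul_assoc]
    congr 1
    calc (1 - S * S) * ((1 + S)⁻¹ * (1 + S)⁻¹) * (1 - S * S)
        = ((1 - S) * ((1 + S) * (1 + S)⁻¹)) * (((1 + S)⁻¹ * (1 + S)) * (1 - S)) := by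
          noncomm_ring
      _ = (1 - S) * (1 - S) := by rw [h1, h2, mul_one, one_mul]
  rw [hfac]
  have h : (1 - S) * (1 - S) = 1 - S - S + S * S := by noncomm_ring
  rw [h]
  module

/-- Conjugation by an invertible `sA` reduces the identity to the scalar-free core. -/
lemma conj_reduce {m : Type*} [Fintype m] [DecidableEq m] (sA S : Matrix m m ℂ)
    (hs1 : sA * sA⁻¹ = 1) (hs2 : sA⁻¹ * sA = 1)
    (key : (2:ℝ)⁻¹ • (1 + S * S) - S =
      (8:ℝ)⁻¹ • ((1 - S * S) * ((2:ℝ)⁻¹ • ((2:ℝ)⁻¹ • (1 + S * S) + S))⁻¹ * (1 - S * S))) :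
    (2:ℝ)⁻¹ • (sA * sA + sA * (S * S) * sA) - sA * S * sA =
      (8:ℝ)⁻¹ • ((sA * sA - sA * (S * S) * sA) *
        ((2:ℝ)⁻¹ • ((2:ℝ)⁻¹ • (sA * sA + sA * (S * S) * sA) + sA * S * sA))⁻¹ *
        (sA * sA - sA * (S * S) * sA)) := by
  have hsum : sA * sA + sA * (S * S) * sA = sA * (1 + S * S) * sA := by noncomm_ring
  have hdiff : sA * sA - sA * (S * S) * sA = sA * (1 - S * S) * sA := by noncomm_ring
  have hmid : (2:ℝ)⁻¹ • ((2:ℝ)⁻¹ • (sA * (1 + S * S) * sA) + sA * S * sA)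
      = sA * ((2:ℝ)⁻¹ • ((2:ℝ)⁻¹ • (1 + S * S) + S)) * sA := by
    simp only [mul_add, add_mul, mul_smul_comm, smul_mul_assoc, smul_add, mul_assoc]
  rw [hsum, hdiff, hmid]
  set M0 := (2:ℝ)⁻¹ • ((2:ℝ)⁻¹ • (1 + S * S) + S) with hM0
  have hinv : (sA * M0 * sA)⁻¹ = sA⁻¹ * M0⁻¹ * sA⁻¹ := by
    rw [Matrix.mul_inv_rev, Matrix.mul_inv_rev, mul_assoc]
  rw [hinv]
  have hcore : sA * (1 - S * S) * sA * (sA⁻¹ * M0⁻¹ * sA⁻¹) * (sA * (1 - S * S) * sA)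
      = sA * ((1 - S * S) * M0⁻¹ * (1 - S * S)) * sA := by
    calc sA * (1 - S * S) * sA * (sA⁻¹ * M0⁻¹ * sA⁻¹) * (sA * (1 - S * S) * sA)
        = sA * (1 - S * S) * ((sA * sA⁻¹) * M0⁻¹ * (sA⁻¹ * sA)) * ((1 - S * S) * sA) := by
          noncomm_ring
      _ = sA * ((1 - S * S) * M0⁻¹ * (1 - S * S)) * sA := by
          rw [hs1, hs2, one_mul, mul_one]; noncomm_ring
  rw [hcore]
  have hW : (1 - S * S) * M0⁻¹ * (1 - S * S) = (8:ℝ) • ((2:ℝ)⁻¹ • (1 + S * S) - S) := by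
    rw [key, smul_smul]; norm_num
  rw [hW]
  simp only [mul_smul_comm, smul_mul_assoc, smul_smul, mul_sub, sub_mul, mul_add, add_mul,
    mul_assoc, smul_sub, smul_add]
  norm_num

/-- `A∇B - A♯B = (1/8)(A-B)((A∇B + A♯B)/2)⁻¹(A-B)` for positive definite `A, B`. -/
theorem arith_geom_difference_identity (n : ℕ)
    (A B : Matrix (Fin n) (Fin n) ℂ) (hA : A.PosDef) (hB : B.PosDef) :
    ((2:ℝ)⁻¹ • (A + B)) - opMean Real.sqrt A B =
      (8:ℝ)⁻¹ • ((A - B) *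
        ((2:ℝ)⁻¹ • ((2:ℝ)⁻¹ • (A + B) + opMean Real.sqrt A B))⁻¹ * (A - B)) := by
  have hAps := hA.posSemidef
  set sA := msqrt A with hsA_def
  have hsA_ps : sA.PosSemidef := msqrt_posSemidef hAps
  have hsA_mul : sA * sA = A := msqrt_mul_self' hAps
  have hdetA : IsUnit A.det := (Matrix.isUnit_iff_isUnit_det A).mp hA.isUnit
  have hdet_sA : IsUnit sA.det := by
    have h : sA.det * sA.det = A.det := by rw [← Matrix.det_mul, hsA_mul]
    rw [isUnit_iff_ne_zero] at hdetA ⊢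
    intro h0
    exact hdetA (by rw [← h, h0, zero_mul])
  have hs1 : sA * sA⁻¹ = 1 := Matrix.mul_nonsing_inv _ hdet_sA
  have hs2 : sA⁻¹ * sA = 1 := Matrix.nonsing_inv_mul _ hdet_sA
  have h_inv_herm : (sA⁻¹)ᴴ = sA⁻¹ := by
    rw [Matrix.conjTranspose_nonsing_inv, hsA_ps.1]
  set C := sA⁻¹ * B * sA⁻¹ with hC_def
  have hC_ps : C.PosSemidef := by
    have h := hB.posSemidef.mul_mul_conjTranspose_same sA⁻¹
    rwa [h_inv_herm] at h
  set S := cfc Real.sqrt C with hS_def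
  have hS_ps : S.PosSemidef := msqrt_posSemidef hC_ps
  have hSS : S * S = C := msqrt_mul_self' hC_ps
  have hB_eq : B = sA * (S * S) * sA := by
    rw [hSS, hC_def]
    calc B = (sA * sA⁻¹) * B * (sA⁻¹ * sA) := by rw [hs1, hs2, one_mul, mul_one]
      _ = sA * (sA⁻¹ * B * sA⁻¹) * sA := by noncomm_ring
  have hT : (1 + S).PosDef := Matrix.PosDef.one.add_posSemidef hS_ps
  have hdT : IsUnit (1 + S).det := (Matrix.isUnit_iff_isUnit_det _).mp hT.isUnit
  have h1 : (1 + S) * (1 + S)⁻¹ = 1 := Matrix.mul_nonsing_inv _ hdT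
  have h2 : (1 + S)⁻¹ * (1 + S) = 1 := Matrix.nonsing_inv_mul _ hdT
  have hop : opMean Real.sqrt A B = sA * S * sA := rfl
  rw [hop, hB_eq, ← hsA_mul]
  exact conj_reduce sA S hs1 hs2 (key_id S h1 h2)
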